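/- Let D be an m×n real matrix, λ_F ≥ 0, λ_NI ≥ 0, and let Y be a random vector in ℝⁿ on a probability space such that each Y_i, each β̂^{FNI}_i(Y, λ_F, λ_NI), and each β̂^F_i(Y − (λ_NI/2)Dᵀ1, λ_NI/2 + λ_F) is square-integrable (so all covariances below are defined). Set Y' = Y − (λ_NI/2)Dᵀ1. Then Σ_{i=1}^n Cov[β̂^{FNI}_i(Y, λ_F, λ_NI), Y_i] = Σ_{i=1}^n Cov[β̂^F_i(Y', λ_NI/2 + λ_F), Y'_i]; that is, the (covariance) degrees of freedom of the fused nearly-isotonic estimator equals that of the fusion estimator applied to the shifted data. -/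

import Mathlib

open Finset MeasureTheory ProbabilityTheory

/-- The fused lasso nearly-isotonic objective
`F(β) = (1/2)‖y − β‖₂² + λ_F Σ_j |(Dβ)_j| + λ_L Σ_i |β_i| + λ_NI Σ_j max((Dβ)_j, 0)`. -/
noncomputable def flniObj {n m : ℕ} (D : Matrix (Fin m) (Fin n) ℝ)
    (y : Fin n → ℝ) (lF lL lNI : ℝ) (β : Fin n → ℝ) : ℝ :=
  (1 / 2) * ∑ i, (y i - β i) ^ 2 + lF * ∑ j, |D.mulVec β j|
    + lL * ∑ i, |β i| + lNI * ∑ j, max (D.mulVec β j) 0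

/-- `Cov[U, V] = E[UV] − E[U]E[V]`. -/
noncomputable def cov {Ω : Type*} [MeasureSpace Ω] (U V : Ω → ℝ) : ℝ :=
  (∫ ω, U ω * V ω) - (∫ ω, U ω) * (∫ ω, V ω)

lemma max_eq_half {x : ℝ} : max x 0 = (x + |x|) / 2 := by
  rcases le_total x 0 with h | h
  · rw [max_eq_right h, abs_of_nonpos h]; ring
  · rw [max_eq_left h, abs_of_nonneg h]; ring

lemma sum_mulVec_eq {n m : ℕ} (D : Matrix (Fin m) (Fin n) ℝ) (β : Fin n → ℝ) :
    ∑ j, D.mulVec β j = ∑ i, D.transpose.mulVec 1 i * β i := by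
  simp only [Matrix.mulVec, dotProduct, Matrix.transpose_apply, Pi.one_apply, mul_one,
    Finset.sum_mul]
  exact Finset.sum_comm

/-- The shift identity: the FNI objective equals the fusion objective with shifted data,
plus a constant independent of `β`. -/
lemma flni_shift {n m : ℕ} (D : Matrix (Fin m) (Fin n) ℝ)
    (y : Fin n → ℝ) (lF lNI : ℝ) (β : Fin n → ℝ) :
    flniObj D y lF 0 lNI β
      = flniObj D (y - (lNI / 2) • D.transpose.mulVec 1) (lNI / 2 + lF) 0 0 β
        + (∑ i, (lNI / 2) * D.transpose.mulVec 1 i * y i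
            - (1 / 2) * ∑ i, ((lNI / 2) * D.transpose.mulVec 1 i) ^ 2) := by
  set c : Fin n → ℝ := fun i => (lNI / 2) * D.transpose.mulVec 1 i with hc
  have hmax : ∑ j, max (D.mulVec β j) 0
      = (∑ j, D.mulVec β j + ∑ j, |D.mulVec β j|) / 2 := by
    rw [← Finset.sum_add_distrib, Finset.sum_div]
    exact Finset.sum_congr rfl fun j _ => max_eq_half
  have hquad : ∑ i, (y i - β i) ^ 2
      = ∑ i, ((y - (lNI / 2) • D.transpose.mulVec 1) i - β i) ^ 2
        + (2 * ∑ i, c i * y i - 2 * ∑ i, c i * β i - ∑ i, c i ^ 2) := by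
    have : ∀ i ∈ Finset.univ, (y i - β i) ^ 2
        = ((y - (lNI / 2) • D.transpose.mulVec 1) i - β i) ^ 2
          + (2 * (c i * y i) - 2 * (c i * β i) - c i ^ 2) := by
      intro i _
      simp only [Pi.sub_apply, Pi.smul_apply, smul_eq_mul, hc]
      ring
    rw [Finset.sum_congr rfl this, Finset.sum_add_distrib]
    rw [Finset.sum_sub_distrib, Finset.sum_sub_distrib, Finset.mul_sum, Finset.mul_sum]
  have hcb : ∑ i, c i * β i = (lNI / 2) * ∑ j, D.mulVec β j := by
    rw [sum_mulVec_eq, Finset.mul_sum]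
    exact Finset.sum_congr rfl fun i _ => by simp [hc]; ring
  simp only [flniObj, hmax, hquad, hcb]
  ring

/-- Uniqueness of the minimizer of the (strictly convex) FNI objective. -/
lemma flni_min_unique {n m : ℕ} (D : Matrix (Fin m) (Fin n) ℝ)
    (y : Fin n → ℝ) {lF lNI : ℝ} (hF : 0 ≤ lF) (hNI : 0 ≤ lNI) (a b : Fin n → ℝ)
    (ha : ∀ β, flniObj D y lF 0 lNI a ≤ flniObj D y lF 0 lNI β)
    (hb : ∀ β, flniObj D y lF 0 lNI b ≤ flniObj D y lF 0 lNI β) : a = b := by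
  by_contra hne
  have hex : ∃ i0, a i0 ≠ b i0 := by
    by_contra h
    push_neg at h
    exact hne (funext h)
  obtain ⟨i0, hi0⟩ := hex
  set G : (Fin n → ℝ) → ℝ := flniObj D y lF 0 lNI with hG
  have hGab : G a = G b := le_antisymm (ha b) (hb a)
  set mβ : Fin n → ℝ := fun i => (a i + b i) / 2 with hm
  -- linearity of mulVec at the midpoint
  have hmv : ∀ j, D.mulVec mβ j = (D.mulVec a j + D.mulVec b j) / 2 := by
    intro j
    simp only [Matrix.mulVec, dotProduct, hm]
    rw [← Finset.sum_add_distrib, Finset.sum_div]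
    exact Finset.sum_congr rfl fun i _ => by ring
  -- quadratic part: exact gap identity
  have hquad : ∑ i, (y i - mβ i) ^ 2
      = (∑ i, (y i - a i) ^ 2 + ∑ i, (y i - b i) ^ 2) / 2
        - ∑ i, (a i - b i) ^ 2 / 4 := by
    rw [← Finset.sum_add_distrib, Finset.sum_div, ← Finset.sum_sub_distrib]
    exact Finset.sum_congr rfl fun i _ => by simp only [hm]; ring
  have hgap : 0 < ∑ i, (a i - b i) ^ 2 / 4 := by
    apply Finset.sum_pos' (fun i _ => by positivity)
    exact ⟨i0, Finset.mem_univ i0, by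
      have : a i0 - b i0 ≠ 0 := sub_ne_zero.mpr hi0
      positivity⟩
  -- abs part
  have habs : ∑ j, |D.mulVec mβ j| ≤ (∑ j, |D.mulVec a j| + ∑ j, |D.mulVec b j|) / 2 := by
    rw [← Finset.sum_add_distrib, Finset.sum_div]
    apply Finset.sum_le_sum
    intro j _
    rw [hmv j, abs_div, abs_of_pos (by norm_num : (0:ℝ) < 2), div_le_div_iff_of_pos_right]
    · exact abs_add_le _ _
    · norm_num
  -- max part
  have hmaxp : ∑ j, max (D.mulVec mβ j) 0
      ≤ (∑ j, max (D.mulVec a j) 0 + ∑ j, max (D.mulVec b j) 0) / 2 := by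
    rw [← Finset.sum_add_distrib, Finset.sum_div]
    apply Finset.sum_le_sum
    intro j _
    rw [hmv j]
    apply max_le
    · have h1 := le_max_left (D.mulVec a j) 0
      have h2 := le_max_left (D.mulVec b j) 0
      linarith
    · have h1 := le_max_right (D.mulVec a j) 0
      have h2 := le_max_right (D.mulVec b j) 0
      linarith
  have hkey : G mβ < (G a + G b) / 2 := by
    simp only [hG, flniObj, zero_mul, add_zero]
    have h1 : lF * ∑ j, |D.mulVec mβ j|
        ≤ lF * ((∑ j, |D.mulVec a j| + ∑ j, |D.mulVec b j|) / 2) :=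
      mul_le_mul_of_nonneg_left habs hF
    have h2 : lNI * ∑ j, max (D.mulVec mβ j) 0
        ≤ lNI * ((∑ j, max (D.mulVec a j) 0 + ∑ j, max (D.mulVec b j) 0) / 2) :=
      mul_le_mul_of_nonneg_left hmaxp hNI
    rw [hquad]
    nlinarith [hgap]
  have := ha mβ
  rw [hGab] at hkey
  simp only [hG] at this hkey
  linarith [hkey, this, hGab]

lemma memLp_mul_integrable {Ω : Type*} [MeasureSpace Ω] [IsProbabilityMeasure (ℙ : Measure Ω)]
    {U V : Ω → ℝ} (hU : MemLp U 2 ℙ) (hV : MemLp V 2 ℙ) :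
    Integrable (fun ω => U ω * V ω) ℙ := by
  have h : Integrable (fun ω => (U ω ^ 2 + V ω ^ 2) / 2) ℙ :=
    (hU.integrable_sq.add hV.integrable_sq).div_const 2
  refine Integrable.mono' h (hU.aestronglyMeasurable.mul hV.aestronglyMeasurable) ?_
  filter_upwards with ω
  rw [Real.norm_eq_abs, abs_mul]
  nlinarith [sq_nonneg (|U ω| - |V ω|), sq_abs (U ω), sq_abs (V ω), abs_nonneg (U ω),
    abs_nonneg (V ω)]

/-- Covariance is unchanged by subtracting a constant from the second argument. -/
lemma cov_sub_const {Ω : Type*} [MeasureSpace Ω] [IsProbabilityMeasure (ℙ : Measure Ω)]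
    {U V : Ω → ℝ} (hU : MemLp U 2 ℙ) (hV : MemLp V 2 ℙ) (k : ℝ) :
    cov U (fun ω => V ω - k) = cov U V := by
  have hUi : Integrable U ℙ := hU.integrable one_le_two
  have hVi : Integrable V ℙ := hV.integrable one_le_two
  have hUV : Integrable (fun ω => U ω * V ω) ℙ := memLp_mul_integrable hU hV
  have hUk : Integrable (fun ω => U ω * k) ℙ := hUi.mul_const k
  have h1 : (∫ ω, U ω * (V ω - k)) = (∫ ω, U ω * V ω) - (∫ ω, U ω) * k := by
    have : (fun ω => U ω * (V ω - k)) = fun ω => U ω * V ω - U ω * k := by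
      funext ω; ring
    rw [this, integral_sub hUV hUk, integral_mul_const]
  have h2 : (∫ ω, (V ω - k)) = (∫ ω, V ω) - k := by
    rw [integral_sub hVi (integrable_const k), integral_const]
    simp
  simp only [cov, h1, h2]
  ring

/-- The covariance degrees of freedom of the fused nearly-isotonic estimator
equals that of the fusion estimator applied to the shifted data
`Y' = Y − (λ_NI/2)Dᵀ1` at penalty `λ_NI/2 + λ_F`. -/
theorem df_fni_eq_df_fusion_shifted {Ω : Type*} [MeasureSpace Ω]
    [IsProbabilityMeasure (ℙ : Measure Ω)]
    {n m : ℕ} (D : Matrix (Fin m) (Fin n) ℝ)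
    (lF lNI : ℝ) (hF : 0 ≤ lF) (hNI : 0 ≤ lNI)
    (Y Y' : Ω → Fin n → ℝ)
    (hY' : ∀ ω, Y' ω = Y ω - (lNI / 2) • D.transpose.mulVec 1)
    (bFNI bF : (Fin n → ℝ) → (Fin n → ℝ))
    (hbFNI : ∀ y β, flniObj D y lF 0 lNI (bFNI y) ≤ flniObj D y lF 0 lNI β)
    (hbF : ∀ y β, flniObj D y (lNI / 2 + lF) 0 0 (bF y) ≤ flniObj D y (lNI / 2 + lF) 0 0 β)
    (hY2 : ∀ i, MemLp (fun ω => Y ω i) 2 ℙ)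
    (hbFNI2 : ∀ i, MemLp (fun ω => bFNI (Y ω) i) 2 ℙ)
    (hbF2 : ∀ i, MemLp (fun ω => bF (Y' ω) i) 2 ℙ) :
    ∑ i, cov (fun ω => bFNI (Y ω) i) (fun ω => Y ω i) =
      ∑ i, cov (fun ω => bF (Y' ω) i) (fun ω => Y' ω i) := by
  -- the FNI estimator equals the fusion estimator on shifted data
  have hpt : ∀ y : Fin n → ℝ, bFNI y = bF (y - (lNI / 2) • D.transpose.mulVec 1) := by
    intro y
    apply flni_min_unique D y hF hNI _ _ (hbFNI y)
    intro β
    rw [flni_shift D y lF lNI, flni_shift D y lF lNI]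
    have := hbF (y - (lNI / 2) • D.transpose.mulVec 1) β
    linarith
  have heq : ∀ ω, bFNI (Y ω) = bF (Y' ω) := by
    intro ω
    rw [hY' ω]
    exact hpt (Y ω)
  apply Finset.sum_congr rfl
  intro i _
  have h1 : (fun ω => bFNI (Y ω) i) = fun ω => bF (Y' ω) i := by
    funext ω; rw [heq ω]
  have h2 : (fun ω => Y' ω i) = fun ω => Y ω i - (lNI / 2) * D.transpose.mulVec 1 i := by
    funext ω; rw [hY' ω]; simp
  rw [h1, h2, cov_sub_const (hbF2 i) (hY2 i)]
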